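/- Let Ω ⊆ ℝⁿ be a nonempty measurable set, K an admissible kernel, ρ a recognition function, u₀ : Ω → ℝ bounded continuous, and 0 < T < ∞. Suppose u : Ω × [0,T) → ℝ is continuous, satisfies u(x,t) = u₀(x) + ∫₀ᵗ g[u](x,s) ds for all (x,t) ∈ Ω × [0,T), and sup_{t∈[0,T)} sup_{x∈Ω} |u(x,t)| < ∞. Then there exist η > 0 and a bounded continuous û : Ω × [0, T+η) → ℝ satisfying û(x,t) = u₀(x) + ∫₀ᵗ g[û](x,s) ds for all (x,t) ∈ Ω × [0,T+η) with û = u on Ω × [0,T). (Equivalently: if T < ∞ is the maximal existence time of the solution, then sup_{x∈Ω}|u(x,t)| → ∞ as t → T⁻.) -/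

import Mathlib

open MeasureTheory Set Filter Topology

namespace S3aux

noncomputable def gnl {n : ℕ} (Ω : Set (EuclideanSpace ℝ (Fin n)))
    (K : EuclideanSpace ℝ (Fin n) → EuclideanSpace ℝ (Fin n) → ℝ) (ψ : ℝ → ℝ)
    (h : EuclideanSpace ℝ (Fin n) → ℝ → ℝ) (x : EuclideanSpace ℝ (Fin n)) (s : ℝ) : ℝ :=
  ∫ y in Ω, K x y * ψ (h x s - h y s)

variable {n : ℕ} {Ω : Set (EuclideanSpace ℝ (Fin n))}
  {K : EuclideanSpace ℝ (Fin n) → EuclideanSpace ℝ (Fin n) → ℝ} {ψ : ℝ → ℝ}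
  {C D L : ℝ}

lemma integrable_integrand (hΩmeas : MeasurableSet Ω)
    (hKnonneg : ∀ x y, 0 ≤ K x y) (hKmeas : Measurable (Function.uncurry K))
    (hKint : ∀ x ∈ Ω, IntegrableOn (K x) Ω)
    (hψc : Continuous ψ) (hψbd : ∀ a, |ψ a| ≤ C)
    (h : EuclideanSpace ℝ (Fin n) → ℝ → ℝ)
    {x : EuclideanSpace ℝ (Fin n)} (hx : x ∈ Ω) (s : ℝ)
    (hmeas : AEMeasurable (fun y => h y s) (volume.restrict Ω)) :
    IntegrableOn (fun y => K x y * ψ (h x s - h y s)) Ω := by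
  have hKxm : AEMeasurable (fun y => K x y) (volume.restrict Ω) :=
    (hKmeas.comp measurable_prodMk_left).aemeasurable
  have hψm : AEMeasurable (fun y => ψ (h x s - h y s)) (volume.restrict Ω) :=
    hψc.measurable.comp_aemeasurable (aemeasurable_const.sub hmeas)
  refine Integrable.mono' ((hKint x hx).const_mul C) (hKxm.mul hψm).aestronglyMeasurable ?_
  refine Eventually.of_forall (fun y => ?_)
  have : |K x y * ψ (h x s - h y s)| = K x y * |ψ (h x s - h y s)| := by
    rw [abs_mul, abs_of_nonneg (hKnonneg x y)]
  rw [Real.norm_eq_abs, this, mul_comm C (K x y)]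
  exact mul_le_mul_of_nonneg_left (hψbd _) (hKnonneg x y)

lemma gnl_bound (hKnonneg : ∀ x y, 0 ≤ K x y)
    (hKint : ∀ x ∈ Ω, IntegrableOn (K x) Ω)
    (hD : ∀ x ∈ Ω, (∫ y in Ω, K x y) ≤ D) (hC : 0 ≤ C)
    (hψbd : ∀ a, |ψ a| ≤ C)
    (h : EuclideanSpace ℝ (Fin n) → ℝ → ℝ)
    {x : EuclideanSpace ℝ (Fin n)} (hx : x ∈ Ω) (s : ℝ) :
    |gnl Ω K ψ h x s| ≤ D * C := by
  have h1 : |gnl Ω K ψ h x s| ≤ ∫ y in Ω, ‖K x y * ψ (h x s - h y s)‖ :=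
    norm_integral_le_integral_norm (μ := volume.restrict Ω)
      (f := fun y => K x y * ψ (h x s - h y s))
  have h2 : (∫ y in Ω, ‖K x y * ψ (h x s - h y s)‖) ≤ ∫ y in Ω, C * K x y := by
    refine integral_mono_of_nonneg (Eventually.of_forall fun y => norm_nonneg _)
      ((hKint x hx).const_mul C) (Eventually.of_forall fun y => ?_)
    show ‖K x y * ψ (h x s - h y s)‖ ≤ C * K x y
    rw [Real.norm_eq_abs, abs_mul, abs_of_nonneg (hKnonneg x y), mul_comm C (K x y)]
    exact mul_le_mul_of_nonneg_left (hψbd _) (hKnonneg x y)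
  have h3 : (∫ y in Ω, C * K x y) = C * ∫ y in Ω, K x y := integral_const_mul _ _
  calc |gnl Ω K ψ h x s| ≤ ∫ y in Ω, C * K x y := h1.trans h2
    _ = C * ∫ y in Ω, K x y := h3
    _ ≤ C * D := mul_le_mul_of_nonneg_left (hD x hx) hC
    _ = D * C := mul_comm _ _


lemma gnl_contOn_s (hΩmeas : MeasurableSet Ω)
    (hKnonneg : ∀ x y, 0 ≤ K x y) (hKmeas : Measurable (Function.uncurry K))
    (hKint : ∀ x ∈ Ω, IntegrableOn (K x) Ω)
    (hψc : Continuous ψ) (hψbd : ∀ a, |ψ a| ≤ C)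
    (h : EuclideanSpace ℝ (Fin n) → ℝ → ℝ) (τ : ℝ)
    {x : EuclideanSpace ℝ (Fin n)} (hx : x ∈ Ω)
    (hmeas : ∀ s ∈ Icc (0:ℝ) τ, AEMeasurable (fun y => h y s) (volume.restrict Ω))
    (hcx : ContinuousOn (fun s => h x s) (Icc (0:ℝ) τ))
    (hcy : ∀ y ∈ Ω, ContinuousOn (fun s => h y s) (Icc (0:ℝ) τ)) :
    ContinuousOn (fun s => gnl Ω K ψ h x s) (Icc (0:ℝ) τ) := by
  refine continuousOn_of_dominated (bound := fun y => C * K x y)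
    (fun s hs => ?_) (fun s hs => Eventually.of_forall fun y => ?_)
    ((hKint x hx).const_mul C) ?_
  · exact (integrable_integrand hΩmeas hKnonneg hKmeas hKint hψc hψbd h hx s
      (hmeas s hs)).aestronglyMeasurable
  · show ‖K x y * ψ (h x s - h y s)‖ ≤ C * K x y
    rw [Real.norm_eq_abs, abs_mul, abs_of_nonneg (hKnonneg x y), mul_comm C (K x y)]
    exact mul_le_mul_of_nonneg_left (hψbd _) (hKnonneg x y)
  · rw [ae_restrict_iff' hΩmeas]
    refine Eventually.of_forall fun y hy => ?_
    exact continuousOn_const.mul (hψc.comp_continuousOn (hcx.sub (hcy y hy)))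

lemma gnl_diff_le (hΩmeas : MeasurableSet Ω)
    (hKnonneg : ∀ x y, 0 ≤ K x y) (hKmeas : Measurable (Function.uncurry K))
    (hKint : ∀ x ∈ Ω, IntegrableOn (K x) Ω)
    (hD : ∀ x ∈ Ω, (∫ y in Ω, K x y) ≤ D)
    (hψc : Continuous ψ) (hψbd : ∀ a, |ψ a| ≤ C) (hL : 0 ≤ L)
    (hψlip : ∀ a b : ℝ, |ψ a - ψ b| ≤ L * |a - b|)
    (h₁ h₂ : EuclideanSpace ℝ (Fin n) → ℝ → ℝ)
    {x : EuclideanSpace ℝ (Fin n)} (hx : x ∈ Ω) (s : ℝ) {β : ℝ} (hβ : 0 ≤ β)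
    (hm₁ : AEMeasurable (fun y => h₁ y s) (volume.restrict Ω))
    (hm₂ : AEMeasurable (fun y => h₂ y s) (volume.restrict Ω))
    (hd : ∀ z ∈ Ω, |h₁ z s - h₂ z s| ≤ β) :
    |gnl Ω K ψ h₁ x s - gnl Ω K ψ h₂ x s| ≤ 2 * L * D * β := by
  have hi₁ := integrable_integrand hΩmeas hKnonneg hKmeas hKint hψc hψbd h₁ hx s hm₁
  have hi₂ := integrable_integrand hΩmeas hKnonneg hKmeas hKint hψc hψbd h₂ hx s hm₂
  have hsub : gnl Ω K ψ h₁ x s - gnl Ω K ψ h₂ x s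
      = ∫ y in Ω, (K x y * ψ (h₁ x s - h₁ y s) - K x y * ψ (h₂ x s - h₂ y s)) :=
    (integral_sub hi₁ hi₂).symm
  rw [hsub, ← Real.norm_eq_abs]
  have h1 : ‖∫ y in Ω, (K x y * ψ (h₁ x s - h₁ y s) - K x y * ψ (h₂ x s - h₂ y s))‖
      ≤ ∫ y in Ω, ‖K x y * ψ (h₁ x s - h₁ y s) - K x y * ψ (h₂ x s - h₂ y s)‖ :=
    norm_integral_le_integral_norm _
  have h2 : (∫ y in Ω, ‖K x y * ψ (h₁ x s - h₁ y s) - K x y * ψ (h₂ x s - h₂ y s)‖)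
      ≤ ∫ y in Ω, (2 * L * β) * K x y := by
    refine integral_mono_of_nonneg (Eventually.of_forall fun y => norm_nonneg _)
      ((hKint x hx).const_mul _) ((ae_restrict_iff' hΩmeas).2 (Eventually.of_forall fun y hy => ?_))
    show ‖K x y * ψ (h₁ x s - h₁ y s) - K x y * ψ (h₂ x s - h₂ y s)‖ ≤ (2 * L * β) * K x y
    rw [Real.norm_eq_abs, ← mul_sub, abs_mul, abs_of_nonneg (hKnonneg x y), mul_comm _ (K x y)]
    refine mul_le_mul_of_nonneg_left ?_ (hKnonneg x y)
    calc |ψ (h₁ x s - h₁ y s) - ψ (h₂ x s - h₂ y s)|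
        ≤ L * |(h₁ x s - h₁ y s) - (h₂ x s - h₂ y s)| := hψlip _ _
      _ ≤ L * (|h₁ x s - h₂ x s| + |h₁ y s - h₂ y s|) := by
          refine mul_le_mul_of_nonneg_left ?_ hL
          calc |(h₁ x s - h₁ y s) - (h₂ x s - h₂ y s)|
              = |(h₁ x s - h₂ x s) - (h₁ y s - h₂ y s)| := by
                congr 1; ring
            _ ≤ |h₁ x s - h₂ x s| + |h₁ y s - h₂ y s| := abs_sub _ _
      _ ≤ L * (β + β) := by
          refine mul_le_mul_of_nonneg_left (add_le_add (hd x hx) (hd y hy)) hL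
      _ = 2 * L * β := by ring
  have h3 : (∫ y in Ω, (2 * L * β) * K x y) = (2 * L * β) * ∫ y in Ω, K x y :=
    integral_const_mul _ _
  calc ‖∫ y in Ω, (K x y * ψ (h₁ x s - h₁ y s) - K x y * ψ (h₂ x s - h₂ y s))‖
      ≤ (2 * L * β) * ∫ y in Ω, K x y := by rw [← h3]; exact h1.trans h2
    _ ≤ (2 * L * β) * D := by
        refine mul_le_mul_of_nonneg_left (hD x hx) (by positivity)
    _ = 2 * L * D * β := by ring

lemma gnl_xdiff_le (hΩmeas : MeasurableSet Ω)
    (hKnonneg : ∀ x y, 0 ≤ K x y) (hKmeas : Measurable (Function.uncurry K))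
    (hKint : ∀ x ∈ Ω, IntegrableOn (K x) Ω)
    (hD : ∀ x ∈ Ω, (∫ y in Ω, K x y) ≤ D)
    (hψc : Continuous ψ) (hψbd : ∀ a, |ψ a| ≤ C) (hC : 0 ≤ C) (hL : 0 ≤ L)
    (hψlip : ∀ a b : ℝ, |ψ a - ψ b| ≤ L * |a - b|)
    (h : EuclideanSpace ℝ (Fin n) → ℝ → ℝ)
    {x x' : EuclideanSpace ℝ (Fin n)} (hx : x ∈ Ω) (hx' : x' ∈ Ω) (s : ℝ)
    (hm : AEMeasurable (fun y => h y s) (volume.restrict Ω)) :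
    |gnl Ω K ψ h x s - gnl Ω K ψ h x' s|
      ≤ C * (∫ y in Ω, |K x y - K x' y|) + L * D * |h x s - h x' s| := by
  have hKxm : AEMeasurable (fun y => K x y) (volume.restrict Ω) :=
    (hKmeas.comp measurable_prodMk_left).aemeasurable
  have hKx'm : AEMeasurable (fun y => K x' y) (volume.restrict Ω) :=
    (hKmeas.comp measurable_prodMk_left).aemeasurable
  have hψm : AEMeasurable (fun y => ψ (h x s - h y s)) (volume.restrict Ω) :=
    hψc.measurable.comp_aemeasurable (aemeasurable_const.sub hm)
  have hψ'm : AEMeasurable (fun y => ψ (h x' s - h y s)) (volume.restrict Ω) :=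
    hψc.measurable.comp_aemeasurable (aemeasurable_const.sub hm)
  -- the three integrands
  have hi₁ := integrable_integrand hΩmeas hKnonneg hKmeas hKint hψc hψbd h hx s hm
  have hi₃ := integrable_integrand hΩmeas hKnonneg hKmeas hKint hψc hψbd h hx' s hm
  have hi₂ : IntegrableOn (fun y => K x' y * ψ (h x s - h y s)) Ω := by
    refine Integrable.mono' ((hKint x' hx').const_mul C) (hKx'm.mul hψm).aestronglyMeasurable
      (Eventually.of_forall fun y => ?_)
    show ‖K x' y * ψ (h x s - h y s)‖ ≤ C * K x' y
    rw [Real.norm_eq_abs, abs_mul, abs_of_nonneg (hKnonneg x' y), mul_comm C (K x' y)]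
    exact mul_le_mul_of_nonneg_left (hψbd _) (hKnonneg x' y)
  have hKdiffint : IntegrableOn (fun y => |K x y - K x' y|) Ω :=
    ((hKint x hx).sub (hKint x' hx')).abs
  have e1 : gnl Ω K ψ h x s - gnl Ω K ψ h x' s
      = (∫ y in Ω, ((K x y - K x' y) * ψ (h x s - h y s)))
        + ∫ y in Ω, (K x' y * ψ (h x s - h y s) - K x' y * ψ (h x' s - h y s)) := by
    rw [integral_sub hi₂ hi₃]
    have : (∫ y in Ω, ((K x y - K x' y) * ψ (h x s - h y s)))
        = gnl Ω K ψ h x s - ∫ y in Ω, K x' y * ψ (h x s - h y s) := by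
      rw [show gnl Ω K ψ h x s = ∫ y in Ω, K x y * ψ (h x s - h y s) from rfl,
        ← integral_sub hi₁ hi₂]
      congr 1; funext y; ring
    rw [this]
    simp only [gnl]
    ring
  have b1 : |∫ y in Ω, ((K x y - K x' y) * ψ (h x s - h y s))|
      ≤ C * ∫ y in Ω, |K x y - K x' y| := by
    rw [← Real.norm_eq_abs]
    refine le_trans (norm_integral_le_integral_norm _) ?_
    rw [← integral_const_mul]
    refine integral_mono_of_nonneg (Eventually.of_forall fun y => norm_nonneg _)
      (hKdiffint.const_mul C) (Eventually.of_forall fun y => ?_)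
    show ‖(K x y - K x' y) * ψ (h x s - h y s)‖ ≤ C * |K x y - K x' y|
    rw [Real.norm_eq_abs, abs_mul, mul_comm C]
    exact mul_le_mul_of_nonneg_left (hψbd _) (abs_nonneg _)
  have b2 : |∫ y in Ω, (K x' y * ψ (h x s - h y s) - K x' y * ψ (h x' s - h y s))|
      ≤ L * D * |h x s - h x' s| := by
    rw [← Real.norm_eq_abs]
    refine le_trans (norm_integral_le_integral_norm _) ?_
    have : (∫ y in Ω, ‖K x' y * ψ (h x s - h y s) - K x' y * ψ (h x' s - h y s)‖)
        ≤ ∫ y in Ω, (L * |h x s - h x' s|) * K x' y := by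
      refine integral_mono_of_nonneg (Eventually.of_forall fun y => norm_nonneg _)
        ((hKint x' hx').const_mul _) (Eventually.of_forall fun y => ?_)
      show ‖K x' y * ψ (h x s - h y s) - K x' y * ψ (h x' s - h y s)‖
          ≤ (L * |h x s - h x' s|) * K x' y
      rw [Real.norm_eq_abs, ← mul_sub, abs_mul, abs_of_nonneg (hKnonneg x' y),
        mul_comm _ (K x' y)]
      refine mul_le_mul_of_nonneg_left ?_ (hKnonneg x' y)
      refine le_trans (hψlip _ _) ?_
      refine mul_le_mul_of_nonneg_left (le_of_eq ?_) hL
      congr 1; ring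
    refine le_trans this ?_
    rw [integral_const_mul]
    calc (L * |h x s - h x' s|) * ∫ y in Ω, K x' y
        ≤ (L * |h x s - h x' s|) * D := by
          exact mul_le_mul_of_nonneg_left (hD x' hx') (by positivity)
      _ = L * D * |h x s - h x' s| := by ring
  calc |gnl Ω K ψ h x s - gnl Ω K ψ h x' s|
      ≤ |∫ y in Ω, ((K x y - K x' y) * ψ (h x s - h y s))|
        + |∫ y in Ω, (K x' y * ψ (h x s - h y s) - K x' y * ψ (h x' s - h y s))| := by
        rw [e1]; exact abs_add_le _ _
    _ ≤ C * (∫ y in Ω, |K x y - K x' y|) + L * D * |h x s - h x' s| := add_le_add b1 b2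

lemma exp_int {lam t : ℝ} (hlam : 0 < lam) :
    ∫ s in (0:ℝ)..t, Real.exp (lam * s) = (Real.exp (lam * t) - 1) / lam := by
  have hd : ∀ s : ℝ, HasDerivAt (fun r => Real.exp (lam * r) / lam) (Real.exp (lam * s)) s := by
    intro s
    have h1 : HasDerivAt (fun r : ℝ => lam * r) lam s := by
      simpa using (hasDerivAt_id s).const_mul lam
    have h2 : HasDerivAt (fun r => Real.exp (lam * r)) (Real.exp (lam * s) * lam) s :=
      (Real.hasDerivAt_exp (lam * s)).comp s h1
    have h3 := h2.div_const lam
    rw [mul_div_cancel_right₀ _ hlam.ne'] at h3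
    exact h3
  rw [intervalIntegral.integral_eq_sub_of_hasDerivAt (fun s _ => hd s)
    ((Real.continuous_exp.comp (continuous_const.mul continuous_id)).intervalIntegrable 0 t)]
  simp [Real.exp_zero]
  ring

lemma contr_est (hΩmeas : MeasurableSet Ω)
    (hKnonneg : ∀ x y, 0 ≤ K x y) (hKmeas : Measurable (Function.uncurry K))
    (hKint : ∀ x ∈ Ω, IntegrableOn (K x) Ω)
    (hD : ∀ x ∈ Ω, (∫ y in Ω, K x y) ≤ D) (hD0 : 0 ≤ D)
    (hψc : Continuous ψ) (hψbd : ∀ a, |ψ a| ≤ C) (hL : 0 ≤ L)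
    (hψlip : ∀ a b : ℝ, |ψ a - ψ b| ≤ L * |a - b|)
    {lam B t : ℝ} (hlam : lam = 4 * L * D + 1) (hB : 0 ≤ B) (ht : 0 ≤ t)
    (h₁ h₂ : EuclideanSpace ℝ (Fin n) → ℝ → ℝ)
    {x : EuclideanSpace ℝ (Fin n)} (hx : x ∈ Ω)
    (hm₁ : ∀ s ∈ Icc (0:ℝ) t, AEMeasurable (fun y => h₁ y s) (volume.restrict Ω))
    (hm₂ : ∀ s ∈ Icc (0:ℝ) t, AEMeasurable (fun y => h₂ y s) (volume.restrict Ω))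
    (hii₁ : IntervalIntegrable (gnl Ω K ψ h₁ x) volume 0 t)
    (hii₂ : IntervalIntegrable (gnl Ω K ψ h₂ x) volume 0 t)
    (hw : ∀ z ∈ Ω, ∀ s ∈ Icc (0:ℝ) t, |h₁ z s - h₂ z s| ≤ B * Real.exp (lam * s)) :
    |(∫ s in (0:ℝ)..t, gnl Ω K ψ h₁ x s) - ∫ s in (0:ℝ)..t, gnl Ω K ψ h₂ x s|
      ≤ B / 2 * Real.exp (lam * t) := by
  have hlampos : 0 < lam := by rw [hlam]; positivity
  have hEpos : (0:ℝ) < Real.exp (lam * t) := Real.exp_pos _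
  have hE1 : (1:ℝ) ≤ Real.exp (lam * t) := by
    rw [← Real.exp_zero]; exact Real.exp_le_exp.2 (by positivity)
  have hsub : (∫ s in (0:ℝ)..t, gnl Ω K ψ h₁ x s) - ∫ s in (0:ℝ)..t, gnl Ω K ψ h₂ x s
      = ∫ s in (0:ℝ)..t, (gnl Ω K ψ h₁ x s - gnl Ω K ψ h₂ x s) :=
    (intervalIntegral.integral_sub hii₁ hii₂).symm
  rw [hsub, ← Real.norm_eq_abs]
  have hbd : ∀ s ∈ Icc (0:ℝ) t, ‖gnl Ω K ψ h₁ x s - gnl Ω K ψ h₂ x s‖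
      ≤ 2 * L * D * B * Real.exp (lam * s) := by
    intro s hs
    rw [Real.norm_eq_abs]
    have := gnl_diff_le hΩmeas hKnonneg hKmeas hKint hD hψc hψbd hL hψlip h₁ h₂ hx s
      (β := B * Real.exp (lam * s)) (by positivity) (hm₁ s hs) (hm₂ s hs)
      (fun z hz => hw z hz s hs)
    calc |gnl Ω K ψ h₁ x s - gnl Ω K ψ h₂ x s| ≤ 2 * L * D * (B * Real.exp (lam * s)) := this
      _ = 2 * L * D * B * Real.exp (lam * s) := by ring
  have key : ‖∫ s in (0:ℝ)..t, (gnl Ω K ψ h₁ x s - gnl Ω K ψ h₂ x s)‖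
      ≤ |∫ s in (0:ℝ)..t, 2 * L * D * B * Real.exp (lam * s)| := by
    refine intervalIntegral.norm_integral_le_abs_of_norm_le (μ := volume) (a := (0:ℝ)) (b := t)
      (f := fun s => gnl Ω K ψ h₁ x s - gnl Ω K ψ h₂ x s)
      (g := fun s => 2 * L * D * B * Real.exp (lam * s)) ?_ ?_
    · refine (ae_restrict_iff' measurableSet_uIoc).2 (Eventually.of_forall fun s hs => ?_)
      refine hbd s ?_
      rcases hs with hs
      have : s ∈ Ioc (0:ℝ) t := by
        simpa [Set.uIoc_of_le ht] using hs
      exact ⟨le_of_lt this.1, this.2⟩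
    · exact (Continuous.intervalIntegrable (by continuity) 0 t)
  refine le_trans key ?_
  have hval : (∫ s in (0:ℝ)..t, 2 * L * D * B * Real.exp (lam * s))
      = 2 * L * D * B * ((Real.exp (lam * t) - 1) / lam) := by
    rw [intervalIntegral.integral_const_mul, exp_int hlampos]
  have habs : |∫ s in (0:ℝ)..t, 2 * L * D * B * Real.exp (lam * s)|
      = 2 * L * D * B * ((Real.exp (lam * t) - 1) / lam) := by
    rw [hval]; refine abs_of_nonneg ?_
    have h0 : (0:ℝ) ≤ (Real.exp (lam * t) - 1) / lam := by
      apply div_nonneg (by linarith) hlampos.le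
    positivity
  rw [habs]
  have h4 : 2 * L * D * B * ((Real.exp (lam * t) - 1) / lam)
      ≤ 2 * L * D * B * (Real.exp (lam * t) / lam) := by
    refine mul_le_mul_of_nonneg_left ?_ (by positivity)
    gcongr <;> linarith
  refine h4.trans ?_
  rw [mul_div_assoc'] at *
  rw [div_le_iff₀ hlampos]
  have : B / 2 * Real.exp (lam * t) * lam = 2 * L * D * B * Real.exp (lam * t)
      + B * Real.exp (lam * t) / 2 := by rw [hlam]; ring
  rw [this]
  nlinarith [mul_nonneg hB hEpos.le]

open scoped Classical in
noncomputable def Vext {n : ℕ} (S : Set (EuclideanSpace ℝ (Fin n) × ℝ))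
    (w : BoundedContinuousFunction S ℝ) (y : EuclideanSpace ℝ (Fin n)) (s : ℝ) : ℝ :=
  if h : (y, s) ∈ S then w ⟨(y, s), h⟩ else 0

lemma Vext_bd {n : ℕ} (S : Set (EuclideanSpace ℝ (Fin n) × ℝ))
    (w : BoundedContinuousFunction S ℝ) (y : EuclideanSpace ℝ (Fin n)) (s : ℝ) :
    |Vext S w y s| ≤ ‖w‖ := by
  unfold Vext
  split
  · rw [← Real.norm_eq_abs]; exact w.norm_coe_le_norm _
  · simpa using norm_nonneg w

lemma Vext_eq {n : ℕ} (S : Set (EuclideanSpace ℝ (Fin n) × ℝ))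
    (w : BoundedContinuousFunction S ℝ) {y : EuclideanSpace ℝ (Fin n)} {s : ℝ}
    (h : (y, s) ∈ S) : Vext S w y s = w ⟨(y, s), h⟩ := by
  unfold Vext
  rw [dif_pos h]

lemma Vext_contOn {n : ℕ} (S : Set (EuclideanSpace ℝ (Fin n) × ℝ))
    (w : BoundedContinuousFunction S ℝ) :
    ContinuousOn (fun p : EuclideanSpace ℝ (Fin n) × ℝ => Vext S w p.1 p.2) S := by
  rw [continuousOn_iff_continuous_restrict]
  have : S.restrict (fun p : EuclideanSpace ℝ (Fin n) × ℝ => Vext S w p.1 p.2)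
      = fun p : S => w p := by
    funext p
    show Vext S w (p : EuclideanSpace ℝ (Fin n) × ℝ).1 (p : EuclideanSpace ℝ (Fin n) × ℝ).2 = w p
    rw [Vext_eq S w (by simpa using p.2)]
  exact (congrArg Continuous this).mpr w.continuous

set_option maxHeartbeats 1000000 in
lemma exist_sol (hΩne : Ω.Nonempty) (hΩmeas : MeasurableSet Ω)
    (hKnonneg : ∀ x y, 0 ≤ K x y) (hKmeas : Measurable (Function.uncurry K))
    (hKint : ∀ x ∈ Ω, IntegrableOn (K x) Ω)
    (hKcont : ∀ x ∈ Ω, ∀ ε > (0:ℝ), ∃ δ > (0:ℝ), ∀ x' ∈ Ω, dist x' x < δ →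
        (∫ y in Ω, |K x' y - K x y|) < ε)
    (hD : ∀ x ∈ Ω, (∫ y in Ω, K x y) ≤ D) (hD0 : 0 ≤ D)
    (hψc : Continuous ψ) (hψbd : ∀ a, |ψ a| ≤ C) (hC : 0 ≤ C) (hL : 0 ≤ L)
    (hψlip : ∀ a b : ℝ, |ψ a - ψ b| ≤ L * |a - b|)
    (u₀ : EuclideanSpace ℝ (Fin n) → ℝ) (hu₀cont : ContinuousOn u₀ Ω)
    (M₀ : ℝ) (hu₀bd : ∀ x ∈ Ω, |u₀ x| ≤ M₀)
    (τ : ℝ) (hτ : 0 < τ) :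
    ∃ U : EuclideanSpace ℝ (Fin n) → ℝ → ℝ,
      ContinuousOn (fun p : EuclideanSpace ℝ (Fin n) × ℝ => U p.1 p.2) (Ω ×ˢ Icc 0 τ) ∧
      (∃ M : ℝ, ∀ x t, |U x t| ≤ M) ∧
      (∀ x ∈ Ω, ∀ t ∈ Icc (0:ℝ) τ, U x t = u₀ x + ∫ s in (0:ℝ)..t, gnl Ω K ψ U x s) := by
  set lam : ℝ := 4 * L * D + 1 with hlamdef
  set S : Set (EuclideanSpace ℝ (Fin n) × ℝ) := Ω ×ˢ Icc (0:ℝ) τ with hSdef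
  set X := BoundedContinuousFunction S ℝ with hXdef
  have hmemS : ∀ {y : EuclideanSpace ℝ (Fin n)} {s : ℝ}, y ∈ Ω → s ∈ Icc (0:ℝ) τ →
      (y, s) ∈ S := fun hy hs => Set.mem_prod.2 ⟨hy, hs⟩
  -- measurability and continuity of slices of `Vext`
  have hVmeas : ∀ (w : X), ∀ s ∈ Icc (0:ℝ) τ,
      AEMeasurable (fun y => Vext S w y s) (volume.restrict Ω) := by
    intro w s hs
    have hc : ContinuousOn (fun y => Vext S w y s) Ω := by
      have := (Vext_contOn S w).comp
        ((continuous_id.prodMk continuous_const).continuousOn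
          (s := Ω) (f := fun y : EuclideanSpace ℝ (Fin n) => (y, s)))
        (fun y hy => hmemS hy hs)
      exact this
    exact hc.aemeasurable hΩmeas
  have hVconts : ∀ (w : X), ∀ y ∈ Ω, ContinuousOn (fun s => Vext S w y s) (Icc (0:ℝ) τ) := by
    intro w y hy
    have := (Vext_contOn S w).comp
      ((continuous_const.prodMk continuous_id).continuousOn
        (s := Icc (0:ℝ) τ) (f := fun s : ℝ => (y, s)))
      (fun s hs => hmemS hy hs)
    exact this
  have hgcont : ∀ (w : X), ∀ x ∈ Ω,
      ContinuousOn (fun s => gnl Ω K ψ (Vext S w) x s) (Icc (0:ℝ) τ) := by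
    intro w x hx
    exact gnl_contOn_s hΩmeas hKnonneg hKmeas hKint hψc hψbd _ τ hx (hVmeas w)
      (hVconts w x hx) (fun y hy => hVconts w y hy)
  have hgii : ∀ (w : X), ∀ x ∈ Ω, ∀ a ∈ Icc (0:ℝ) τ, ∀ b ∈ Icc (0:ℝ) τ,
      IntervalIntegrable (gnl Ω K ψ (Vext S w) x) volume a b := by
    intro w x hx a ha b hb
    exact ((hgcont w x hx).mono (Set.uIcc_subset_Icc ha hb)).intervalIntegrable
  have hΦcont : ∀ w : X, ContinuousOn
      (fun p : EuclideanSpace ℝ (Fin n) × ℝ =>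
        u₀ p.1 + ∫ s in (0:ℝ)..p.2, gnl Ω K ψ (Vext S w) p.1 s) S := by
    intro w
    refine ContinuousOn.add (hu₀cont.comp continuous_fst.continuousOn (fun p hp => hp.1)) ?_
    rintro ⟨x₀, t₀⟩ hp₀
    have hx₀ : x₀ ∈ Ω := hp₀.1
    have ht₀ : t₀ ∈ Icc (0:ℝ) τ := hp₀.2
    set g := gnl Ω K ψ (Vext S w) with hgdef
    set eK : EuclideanSpace ℝ (Fin n) → ℝ := fun x => ∫ y in Ω, |K x y - K x₀ y| with heKdef
    set J : EuclideanSpace ℝ (Fin n) → ℝ :=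
      fun x => ∫ s in (0:ℝ)..t₀, |Vext S w x s - Vext S w x₀ s| with hJdef
    have heK0 : ∀ x, 0 ≤ eK x := fun x => integral_nonneg (fun y => abs_nonneg _)
    have hJ0 : ∀ x, 0 ≤ J x :=
      fun x => intervalIntegral.integral_nonneg ht₀.1 (fun s _ => abs_nonneg _)
    have hgb : ∀ x ∈ Ω, ∀ s : ℝ, |g x s| ≤ D * C :=
      fun x hx s => gnl_bound hKnonneg hKint hD hC hψbd _ hx s
    have key : ∀ p ∈ S, dist (∫ s in (0:ℝ)..p.2, g p.1 s) (∫ s in (0:ℝ)..t₀, g x₀ s)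
        ≤ D * C * |p.2 - t₀| + (C * eK p.1 * τ + L * D * J p.1) := by
      rintro ⟨x, t⟩ hp
      have hx : x ∈ Ω := hp.1
      have ht : t ∈ Icc (0:ℝ) τ := hp.2
      have h0τ : (0:ℝ) ∈ Icc (0:ℝ) τ := ⟨le_rfl, hτ.le⟩
      have hA : |(∫ s in (0:ℝ)..t, g x s) - ∫ s in (0:ℝ)..t₀, g x s| ≤ D * C * |t - t₀| := by
        rw [intervalIntegral.integral_interval_sub_left (hgii w x hx 0 h0τ t ht)
          (hgii w x hx 0 h0τ t₀ ht₀)]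
        have hb : ∀ s ∈ Set.uIoc t₀ t, ‖g x s‖ ≤ D * C := fun s _ => by
          rw [Real.norm_eq_abs]; exact hgb x hx s
        have h1 := intervalIntegral.norm_integral_le_of_norm_le_const hb
        rw [Real.norm_eq_abs] at h1
        exact h1
      have hB : |(∫ s in (0:ℝ)..t₀, g x s) - ∫ s in (0:ℝ)..t₀, g x₀ s|
          ≤ C * eK x * t₀ + L * D * J x := by
        rw [← intervalIntegral.integral_sub (hgii w x hx 0 h0τ t₀ ht₀)
          (hgii w x₀ hx₀ 0 h0τ t₀ ht₀)]
        have hb : ∀ᵐ s ∂volume.restrict (Set.uIoc 0 t₀), ‖g x s - g x₀ s‖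
            ≤ C * eK x + L * D * |Vext S w x s - Vext S w x₀ s| := by
          refine (ae_restrict_iff' measurableSet_uIoc).2 (Eventually.of_forall fun s hs => ?_)
          have hsI : s ∈ Icc (0:ℝ) τ := by
            rw [Set.uIoc_of_le ht₀.1] at hs
            exact ⟨hs.1.le, hs.2.trans ht₀.2⟩
          rw [Real.norm_eq_abs]
          exact gnl_xdiff_le hΩmeas hKnonneg hKmeas hKint hD hψc hψbd hC hL hψlip _ hx hx₀ s
            (hVmeas w s hsI)
        have hVabs : ContinuousOn (fun s => L * D * |Vext S w x s - Vext S w x₀ s|)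
            (Icc (0:ℝ) τ) :=
          continuousOn_const.mul (((hVconts w x hx).sub (hVconts w x₀ hx₀)).abs)
        have hint2 : IntervalIntegrable
            (fun s => L * D * |Vext S w x s - Vext S w x₀ s|) volume 0 t₀ :=
          (hVabs.mono (Set.uIcc_subset_Icc h0τ ht₀)).intervalIntegrable
        have hint : IntervalIntegrable
            (fun s => C * eK x + L * D * |Vext S w x s - Vext S w x₀ s|) volume 0 t₀ :=
          intervalIntegrable_const.add hint2
        have h2 := intervalIntegral.norm_integral_le_abs_of_norm_le hb hint
        rw [Real.norm_eq_abs] at h2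
        refine h2.trans ?_
        have h3 : (∫ s in (0:ℝ)..t₀, (C * eK x + L * D * |Vext S w x s - Vext S w x₀ s|))
            = C * eK x * t₀ + L * D * J x := by
          rw [intervalIntegral.integral_add intervalIntegrable_const hint2,
            intervalIntegral.integral_const, intervalIntegral.integral_const_mul]
          simp only [smul_eq_mul, sub_zero, hJdef]
          ring
        rw [h3, abs_of_nonneg (add_nonneg (mul_nonneg (mul_nonneg hC (heK0 x)) ht₀.1)
          (mul_nonneg (mul_nonneg hL hD0) (hJ0 x)))]
      have hsplit : dist (∫ s in (0:ℝ)..t, g x s) (∫ s in (0:ℝ)..t₀, g x₀ s)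
          ≤ |(∫ s in (0:ℝ)..t, g x s) - ∫ s in (0:ℝ)..t₀, g x s|
            + |(∫ s in (0:ℝ)..t₀, g x s) - ∫ s in (0:ℝ)..t₀, g x₀ s| := by
        rw [Real.dist_eq]
        exact abs_sub_le _ _ _
      refine hsplit.trans (add_le_add hA (hB.trans ?_))
      have : C * eK x * t₀ ≤ C * eK x * τ :=
        mul_le_mul_of_nonneg_left ht₀.2 (by positivity)
      linarith
    -- now the limit
    have heKlim : Tendsto eK (nhdsWithin x₀ Ω) (nhds 0) := by
      rw [Metric.tendsto_nhdsWithin_nhds]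
      intro ε hε
      obtain ⟨δ, hδ, hδε⟩ := hKcont x₀ hx₀ ε hε
      refine ⟨δ, hδ, fun {x} hx hd => ?_⟩
      rw [Real.dist_eq, sub_zero, abs_of_nonneg (heK0 x)]
      exact hδε x hx hd
    have hJlim : Tendsto J (nhdsWithin x₀ Ω) (nhds 0) := by
      have hJ' : ∀ x, J x = ∫ s in Ioc (0:ℝ) t₀, |Vext S w x s - Vext S w x₀ s| := by
        intro x
        rw [hJdef]
        exact intervalIntegral.integral_of_le ht₀.1
      have hcJ : ContinuousOn
          (fun x => ∫ s in Ioc (0:ℝ) t₀, |Vext S w x s - Vext S w x₀ s|) Ω := by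
        refine continuousOn_of_dominated (bound := fun _ => 2 * ‖w‖) ?_ ?_ ?_ ?_
        · intro x hx
          have hIcc : Ioc (0:ℝ) t₀ ⊆ Icc (0:ℝ) τ := fun s hs => ⟨hs.1.le, hs.2.trans ht₀.2⟩
          have : ContinuousOn (fun s => |Vext S w x s - Vext S w x₀ s|) (Ioc (0:ℝ) t₀) :=
            (((hVconts w x hx).sub (hVconts w x₀ hx₀)).abs).mono hIcc
          exact (this.aemeasurable measurableSet_Ioc).aestronglyMeasurable
        · intro x hx
          refine Eventually.of_forall fun s => ?_
          rw [Real.norm_eq_abs, abs_abs]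
          calc |Vext S w x s - Vext S w x₀ s| ≤ |Vext S w x s| + |Vext S w x₀ s| := abs_sub _ _
            _ ≤ ‖w‖ + ‖w‖ := add_le_add (Vext_bd S w x s) (Vext_bd S w x₀ s)
            _ = 2 * ‖w‖ := by ring
        · exact integrableOn_const measure_Ioc_lt_top.ne
        · refine (ae_restrict_iff' measurableSet_Ioc).2 (Eventually.of_forall fun s hs => ?_)
          have hsI : s ∈ Icc (0:ℝ) τ := ⟨hs.1.le, hs.2.trans ht₀.2⟩
          have hcx : ∀ z ∈ Ω, ContinuousOn (fun x => Vext S w x s) Ω := by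
            intro z hz
            exact (Vext_contOn S w).comp
              ((continuous_id.prodMk continuous_const).continuousOn
                (s := Ω) (f := fun y : EuclideanSpace ℝ (Fin n) => (y, s)))
              (fun y hy => hmemS hy hsI)
          exact ((hcx x₀ hx₀).sub continuousOn_const).abs
      have h0 : (0:ℝ) = ∫ s in Ioc (0:ℝ) t₀, |Vext S w x₀ s - Vext S w x₀ s| := by simp
      have := (hcJ x₀ hx₀)
      rw [ContinuousWithinAt] at this
      rw [← h0] at this
      have heq : ∀ x, J x = (fun x => ∫ s in Ioc (0:ℝ) t₀, |Vext S w x s - Vext S w x₀ s|) x :=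
        hJ'
      exact Tendsto.congr' (Eventually.of_forall fun x => (heq x).symm) this
    have hfst : Tendsto Prod.fst (nhdsWithin (x₀, t₀) S) (nhdsWithin x₀ Ω) := by
      apply tendsto_nhdsWithin_of_tendsto_nhds_of_eventually_within
      · exact (continuous_fst.tendsto _).mono_left nhdsWithin_le_nhds
      · exact eventually_mem_nhdsWithin.mono (fun p hp => hp.1)
    have hbnd : Tendsto (fun p : EuclideanSpace ℝ (Fin n) × ℝ =>
        D * C * |p.2 - t₀| + (C * eK p.1 * τ + L * D * J p.1))
        (nhdsWithin (x₀, t₀) S) (nhds 0) := by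
      have ht1 : Tendsto (fun p : EuclideanSpace ℝ (Fin n) × ℝ => D * C * |p.2 - t₀|)
          (nhdsWithin (x₀, t₀) S) (nhds 0) := by
        have hc : Continuous (fun p : EuclideanSpace ℝ (Fin n) × ℝ => D * C * |p.2 - t₀|) :=
          continuous_const.mul ((continuous_snd.sub continuous_const).abs)
        have := hc.tendsto (x₀, t₀)
        simp only [sub_self, abs_zero, mul_zero] at this
        exact this.mono_left nhdsWithin_le_nhds
      have ht2 : Tendsto (fun p : EuclideanSpace ℝ (Fin n) × ℝ => C * eK p.1 * τ)
          (nhdsWithin (x₀, t₀) S) (nhds 0) := by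
        have := ((heKlim.comp hfst).const_mul C).mul_const τ
        simpa using this
      have ht3 : Tendsto (fun p : EuclideanSpace ℝ (Fin n) × ℝ => L * D * J p.1)
          (nhdsWithin (x₀, t₀) S) (nhds 0) := by
        have := (hJlim.comp hfst).const_mul (L * D)
        simpa using this
      have := (ht1.add (ht2.add ht3))
      simpa using this
    rw [ContinuousWithinAt, tendsto_iff_dist_tendsto_zero]
    refine squeeze_zero' (Eventually.of_forall fun p => dist_nonneg) ?_ hbnd
    exact eventually_mem_nhdsWithin.mono (fun p hp => key p hp)
  obtain ⟨Φ, hΦapp⟩ : ∃ Φ : X → X, ∀ (w : X) (p : S),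
      (Φ w) p = u₀ (p : EuclideanSpace ℝ (Fin n) × ℝ).1
        + ∫ s in (0:ℝ)..(p : EuclideanSpace ℝ (Fin n) × ℝ).2,
            gnl Ω K ψ (Vext S w) (p : EuclideanSpace ℝ (Fin n) × ℝ).1 s := by
    refine ⟨fun w => BoundedContinuousFunction.ofNormedAddCommGroup
      (fun p : S => u₀ (p : EuclideanSpace ℝ (Fin n) × ℝ).1
        + ∫ s in (0:ℝ)..(p : EuclideanSpace ℝ (Fin n) × ℝ).2,
            gnl Ω K ψ (Vext S w) (p : EuclideanSpace ℝ (Fin n) × ℝ).1 s)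
      (continuousOn_iff_continuous_restrict.1 (hΦcont w)) (M₀ + D * C * τ)
      (fun p => ?_), fun w p => rfl⟩
    obtain ⟨hx, ht⟩ : (p : EuclideanSpace ℝ (Fin n) × ℝ).1 ∈ Ω
        ∧ (p : EuclideanSpace ℝ (Fin n) × ℝ).2 ∈ Icc (0:ℝ) τ := p.2
    rw [Real.norm_eq_abs]
    refine (abs_add_le _ _).trans (add_le_add (hu₀bd _ hx) ?_)
    have hb : ∀ s ∈ Set.uIoc (0:ℝ) (p : EuclideanSpace ℝ (Fin n) × ℝ).2,
        ‖gnl Ω K ψ (Vext S w) (p : EuclideanSpace ℝ (Fin n) × ℝ).1 s‖ ≤ D * C := by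
      intro s _
      rw [Real.norm_eq_abs]
      exact gnl_bound hKnonneg hKint hD hC hψbd _ hx s
    have := intervalIntegral.norm_integral_le_of_norm_le_const hb
    rw [Real.norm_eq_abs] at this
    refine this.trans ?_
    rw [sub_zero, abs_of_nonneg ht.1]
    exact mul_le_mul_of_nonneg_left ht.2 (by positivity)
  -- the contraction estimate
  have hkey : ∀ (w w' : X) (B : ℝ), 0 ≤ B →
      (∀ p : S, |w p - w' p| ≤ B * Real.exp (lam * (p : EuclideanSpace ℝ (Fin n) × ℝ).2)) →
      ∀ p : S, |(Φ w) p - (Φ w') p|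
        ≤ B / 2 * Real.exp (lam * (p : EuclideanSpace ℝ (Fin n) × ℝ).2) := by
    intro w w' B hB hw p
    obtain ⟨hx, ht⟩ : (p : EuclideanSpace ℝ (Fin n) × ℝ).1 ∈ Ω
        ∧ (p : EuclideanSpace ℝ (Fin n) × ℝ).2 ∈ Icc (0:ℝ) τ := p.2
    rw [hΦapp, hΦapp, add_sub_add_left_eq_sub]
    refine contr_est hΩmeas hKnonneg hKmeas hKint hD hD0 hψc hψbd hL hψlip hlamdef hB ht.1
      (Vext S w) (Vext S w') hx
      (fun s hs => hVmeas w s ⟨hs.1, hs.2.trans ht.2⟩)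
      (fun s hs => hVmeas w' s ⟨hs.1, hs.2.trans ht.2⟩)
      (hgii w _ hx 0 ⟨le_rfl, hτ.le⟩ _ ht)
      (hgii w' _ hx 0 ⟨le_rfl, hτ.le⟩ _ ht)
      ?_
    intro z hz s hs
    have hzs : (z, s) ∈ S := hmemS hz ⟨hs.1, hs.2.trans ht.2⟩
    rw [Vext_eq S w hzs, Vext_eq S w' hzs]
    exact hw ⟨(z, s), hzs⟩
  -- iterates
  have hexp1 : ∀ t : ℝ, 0 ≤ t → (1:ℝ) ≤ Real.exp (lam * t) := by
    intro t ht
    rw [← Real.exp_zero]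
    refine Real.exp_le_exp.2 (by positivity)
  have hiter : ∀ (m : ℕ) (w w' : X) (p : S), |(Φ^[m] w) p - (Φ^[m] w') p|
      ≤ (dist w w' / 2 ^ m) * Real.exp (lam * (p : EuclideanSpace ℝ (Fin n) × ℝ).2) := by
    intro m
    induction m with
    | zero =>
      intro w w' p
      simp only [Function.iterate_zero_apply, pow_zero, div_one]
      have h1 : |w p - w' p| ≤ dist w w' := by
        rw [← Real.dist_eq]; exact BoundedContinuousFunction.dist_coe_le_dist _
      refine h1.trans ?_
      exact le_mul_of_one_le_right dist_nonneg (hexp1 _ p.2.2.1)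
    | succ m ih =>
      intro w w' p
      rw [Function.iterate_succ_apply', Function.iterate_succ_apply']
      have := hkey (Φ^[m] w) (Φ^[m] w') (dist w w' / 2 ^ m) (by positivity)
        (fun q => ih w w' q) p
      refine this.trans (le_of_eq ?_)
      rw [pow_succ]
      ring
  have hlipm : ∀ (m : ℕ) (w w' : X),
      dist (Φ^[m] w) (Φ^[m] w') ≤ (Real.exp (lam * τ) / 2 ^ m) * dist w w' := by
    intro m w w'
    refine (BoundedContinuousFunction.dist_le (by positivity)).2 (fun p => ?_)
    rw [Real.dist_eq]
    refine (hiter m w w' p).trans ?_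
    have hle : Real.exp (lam * (p : EuclideanSpace ℝ (Fin n) × ℝ).2) ≤ Real.exp (lam * τ) := by
      refine Real.exp_le_exp.2 ?_
      have h2 := p.2.2.2
      have hlam0 : (0:ℝ) ≤ lam := by rw [hlamdef]; positivity
      exact mul_le_mul_of_nonneg_left h2 hlam0
    calc dist w w' / 2 ^ m * Real.exp (lam * (p : EuclideanSpace ℝ (Fin n) × ℝ).2)
        ≤ dist w w' / 2 ^ m * Real.exp (lam * τ) :=
          mul_le_mul_of_nonneg_left hle (by positivity)
      _ = Real.exp (lam * τ) / 2 ^ m * dist w w' := by ring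
  obtain ⟨m, hm⟩ : ∃ m : ℕ, Real.exp (lam * τ) < 2 ^ m :=
    pow_unbounded_of_one_lt _ one_lt_two
  have hq1 : Real.exp (lam * τ) / 2 ^ m < 1 := (div_lt_one (by positivity)).2 hm
  have hq0 : (0:ℝ) ≤ Real.exp (lam * τ) / 2 ^ m := by positivity
  haveI : Nonempty X := ⟨0⟩
  have hcontr : ContractingWith (Real.toNNReal (Real.exp (lam * τ) / 2 ^ m)) (Φ^[m]) := by
    constructor
    · rw [← NNReal.coe_lt_coe, Real.coe_toNNReal _ hq0, NNReal.coe_one]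
      exact hq1
    · refine LipschitzWith.of_dist_le_mul (fun w w' => ?_)
      rw [Real.coe_toNNReal _ hq0]
      exact hlipm m w w'
  set wfix := ContractingWith.fixedPoint (Φ^[m]) hcontr with hwfixdef
  have hfix : Φ wfix = wfix := ContractingWith.isFixedPt_fixedPoint_iterate hcontr
  refine ⟨Vext S wfix, Vext_contOn S wfix, ⟨‖wfix‖, fun x t => Vext_bd S wfix x t⟩, ?_⟩
  intro x hx t ht
  have hp : (x, t) ∈ S := hmemS hx ht
  rw [Vext_eq S wfix hp]
  conv_lhs => rw [← hfix]
  rw [hΦapp wfix ⟨(x, t), hp⟩]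

set_option maxHeartbeats 1000000 in
lemma uniq_sol (hΩne : Ω.Nonempty) (hΩmeas : MeasurableSet Ω)
    (hKnonneg : ∀ x y, 0 ≤ K x y) (hKmeas : Measurable (Function.uncurry K))
    (hKint : ∀ x ∈ Ω, IntegrableOn (K x) Ω)
    (hD : ∀ x ∈ Ω, (∫ y in Ω, K x y) ≤ D) (hD0 : 0 ≤ D)
    (hψc : Continuous ψ) (hψbd : ∀ a, |ψ a| ≤ C) (hC : 0 ≤ C) (hL : 0 ≤ L)
    (hψlip : ∀ a b : ℝ, |ψ a - ψ b| ≤ L * |a - b|)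
    (u₀ : EuclideanSpace ℝ (Fin n) → ℝ) (τ : ℝ) (hτ0 : 0 ≤ τ)
    (h₁ h₂ : EuclideanSpace ℝ (Fin n) → ℝ → ℝ)
    (hc₁ : ∀ x ∈ Ω, ContinuousOn (fun s => h₁ x s) (Icc (0:ℝ) τ))
    (hc₂ : ∀ x ∈ Ω, ContinuousOn (fun s => h₂ x s) (Icc (0:ℝ) τ))
    (hm₁ : ∀ s ∈ Icc (0:ℝ) τ, AEMeasurable (fun y => h₁ y s) (volume.restrict Ω))
    (hm₂ : ∀ s ∈ Icc (0:ℝ) τ, AEMeasurable (fun y => h₂ y s) (volume.restrict Ω))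
    (B₁ : ℝ) (hb₁ : ∀ x ∈ Ω, ∀ t ∈ Icc (0:ℝ) τ, |h₁ x t| ≤ B₁)
    (B₂ : ℝ) (hb₂ : ∀ x ∈ Ω, ∀ t ∈ Icc (0:ℝ) τ, |h₂ x t| ≤ B₂)
    (heq₁ : ∀ x ∈ Ω, ∀ t ∈ Icc (0:ℝ) τ, h₁ x t = u₀ x + ∫ s in (0:ℝ)..t, gnl Ω K ψ h₁ x s)
    (heq₂ : ∀ x ∈ Ω, ∀ t ∈ Icc (0:ℝ) τ, h₂ x t = u₀ x + ∫ s in (0:ℝ)..t, gnl Ω K ψ h₂ x s) :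
    ∀ x ∈ Ω, ∀ t ∈ Icc (0:ℝ) τ, h₁ x t = h₂ x t := by
  set lam : ℝ := 4 * L * D + 1 with hlamdef
  have hlam0 : (0:ℝ) ≤ lam := by rw [hlamdef]; positivity
  obtain ⟨x₀, hx₀⟩ := hΩne
  set SB : Set ℝ := (fun q : EuclideanSpace ℝ (Fin n) × ℝ =>
    Real.exp (-(lam * q.2)) * |h₁ q.1 q.2 - h₂ q.1 q.2|) '' (Ω ×ˢ Icc (0:ℝ) τ) with hSBdef
  have hSBne : SB.Nonempty := ⟨_, ⟨(x₀, 0), Set.mem_prod.2 ⟨hx₀, ⟨le_rfl, hτ0⟩⟩, rfl⟩⟩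
  have hSBbdd : BddAbove SB := by
    refine ⟨B₁ + B₂, fun b hb => ?_⟩
    obtain ⟨⟨z, s⟩, hzs, rfl⟩ := hb
    have hz : z ∈ Ω := hzs.1
    have hs : s ∈ Icc (0:ℝ) τ := hzs.2
    have he1 : Real.exp (-(lam * s)) ≤ 1 := by
      rw [Real.exp_le_one_iff]
      simp only [neg_nonpos]
      exact mul_nonneg hlam0 hs.1
    calc Real.exp (-(lam * s)) * |h₁ z s - h₂ z s| ≤ 1 * |h₁ z s - h₂ z s| :=
        mul_le_mul_of_nonneg_right he1 (abs_nonneg _)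
      _ = |h₁ z s - h₂ z s| := one_mul _
      _ ≤ |h₁ z s| + |h₂ z s| := abs_sub _ _
      _ ≤ B₁ + B₂ := add_le_add (hb₁ z hz s hs) (hb₂ z hz s hs)
  set B : ℝ := sSup SB with hBdef
  have hB0 : 0 ≤ B := by
    refine le_trans ?_ (le_csSup hSBbdd ⟨(x₀, 0), Set.mem_prod.2 ⟨hx₀, ⟨le_rfl, hτ0⟩⟩, rfl⟩)
    positivity
  have hBle : ∀ z ∈ Ω, ∀ s ∈ Icc (0:ℝ) τ, |h₁ z s - h₂ z s| ≤ B * Real.exp (lam * s) := by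
    intro z hz s hs
    have hmem : Real.exp (-(lam * s)) * |h₁ z s - h₂ z s| ∈ SB :=
      ⟨(z, s), Set.mem_prod.2 ⟨hz, hs⟩, rfl⟩
    have h := le_csSup hSBbdd hmem
    have hcalc : |h₁ z s - h₂ z s|
        = Real.exp (lam * s) * (Real.exp (-(lam * s)) * |h₁ z s - h₂ z s|) := by
      rw [← mul_assoc, ← Real.exp_add]
      simp
    rw [hcalc]
    calc Real.exp (lam * s) * (Real.exp (-(lam * s)) * |h₁ z s - h₂ z s|)
        ≤ Real.exp (lam * s) * B := mul_le_mul_of_nonneg_left h (Real.exp_pos _).le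
      _ = B * Real.exp (lam * s) := mul_comm _ _
  have hii : ∀ (h' : EuclideanSpace ℝ (Fin n) → ℝ → ℝ),
      (∀ x ∈ Ω, ContinuousOn (fun s => h' x s) (Icc (0:ℝ) τ)) →
      (∀ s ∈ Icc (0:ℝ) τ, AEMeasurable (fun y => h' y s) (volume.restrict Ω)) →
      ∀ x ∈ Ω, ∀ t ∈ Icc (0:ℝ) τ, IntervalIntegrable (gnl Ω K ψ h' x) volume 0 t := by
    intro h' hc hm x hx t ht
    have hcont := gnl_contOn_s hΩmeas hKnonneg hKmeas hKint hψc hψbd h' τ hx hm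
      (hc x hx) (fun y hy => hc y hy)
    exact (hcont.mono (Set.uIcc_subset_Icc ⟨le_rfl, hτ0⟩ ht)).intervalIntegrable
  have half : ∀ x ∈ Ω, ∀ t ∈ Icc (0:ℝ) τ,
      |h₁ x t - h₂ x t| ≤ B / 2 * Real.exp (lam * t) := by
    intro x hx t ht
    rw [heq₁ x hx t ht, heq₂ x hx t ht, add_sub_add_left_eq_sub]
    refine contr_est hΩmeas hKnonneg hKmeas hKint hD hD0 hψc hψbd hL hψlip hlamdef hB0 ht.1
      h₁ h₂ hx (fun s hs => hm₁ s ⟨hs.1, hs.2.trans ht.2⟩)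
      (fun s hs => hm₂ s ⟨hs.1, hs.2.trans ht.2⟩)
      (hii h₁ hc₁ hm₁ x hx t ht) (hii h₂ hc₂ hm₂ x hx t ht) ?_
    intro z hz s hs
    exact hBle z hz s ⟨hs.1, hs.2.trans ht.2⟩
  have hBhalf : B ≤ B / 2 := by
    refine csSup_le hSBne ?_
    rintro b ⟨⟨z, s⟩, hzs, rfl⟩
    have hz : z ∈ Ω := hzs.1
    have hs : s ∈ Icc (0:ℝ) τ := hzs.2
    have := half z hz s hs
    calc Real.exp (-(lam * s)) * |h₁ z s - h₂ z s|
        ≤ Real.exp (-(lam * s)) * (B / 2 * Real.exp (lam * s)) :=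
          mul_le_mul_of_nonneg_left this (Real.exp_pos _).le
      _ = B / 2 * (Real.exp (-(lam * s)) * Real.exp (lam * s)) := by ring
      _ = B / 2 := by rw [← Real.exp_add]; simp
  have hBzero : B = 0 := le_antisymm (by linarith) hB0
  intro x hx t ht
  have := hBle x hx t ht
  rw [hBzero, zero_mul] at this
  have habs : |h₁ x t - h₂ x t| = 0 := le_antisymm this (abs_nonneg _)
  have := abs_eq_zero.1 habs
  linarith [sub_eq_zero.1 this]

end S3aux

open S3aux in
set_option maxHeartbeats 1000000 in
/-- If `u` is a solution of the IVP on `Ω × [0,T)` with `T < ∞` which remains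
uniformly bounded, then the solution extends to a bounded continuous solution on
`Ω × [0, T+η)` for some `η > 0`.  (Equivalently, a finite maximal existence time forces
blow-up of the sup norm.) -/
theorem statement3
    (n : ℕ) (Ω : Set (EuclideanSpace ℝ (Fin n)))
    (hΩne : Ω.Nonempty) (hΩmeas : MeasurableSet Ω)
    -- `K` is an admissible kernel:
    (K : EuclideanSpace ℝ (Fin n) → EuclideanSpace ℝ (Fin n) → ℝ)
    (hKnonneg : ∀ x y, 0 ≤ K x y)
    (hKmeas : Measurable (Function.uncurry K))
    (hKint : ∀ x ∈ Ω, IntegrableOn (K x) Ω)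
    (hKcont : ∀ x ∈ Ω, ∀ ε > (0:ℝ), ∃ δ > (0:ℝ), ∀ x' ∈ Ω, dist x' x < δ →
        (∫ y in Ω, |K x' y - K x y|) < ε)
    (D : ℝ) (hD : ∀ x ∈ Ω, (∫ y in Ω, K x y) ≤ D)
    -- `ρ` is a recognition function:
    (ρ : ℝ → ℝ) (hρ : Differentiable ℝ ρ)
    (hρ'lip : ∀ R : ℝ, 0 < R → ∃ L : ℝ, ∀ a b : ℝ, |a| ≤ R → |b| ≤ R →
        |deriv ρ a - deriv ρ b| ≤ L * |a - b|)
    -- `u₀` bounded and continuous on `Ω`: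
    (u₀ : EuclideanSpace ℝ (Fin n) → ℝ)
    (hu₀cont : ContinuousOn u₀ Ω) (M₀ : ℝ) (hu₀bd : ∀ x ∈ Ω, |u₀ x| ≤ M₀)
    -- `u` solves the IVP on `Ω × [0,T)` and stays uniformly bounded:
    (T : ℝ) (hT : 0 < T)
    (u : EuclideanSpace ℝ (Fin n) → ℝ → ℝ)
    (hucont : ContinuousOn (fun p : EuclideanSpace ℝ (Fin n) × ℝ => u p.1 p.2) (Ω ×ˢ Ico 0 T))
    (hueq : ∀ x ∈ Ω, ∀ t ∈ Ico (0:ℝ) T,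
        u x t = u₀ x + ∫ s in (0:ℝ)..t, ∫ y in Ω, K x y * deriv ρ (u x s - u y s))
    (R : ℝ) (hubd : ∀ x ∈ Ω, ∀ t ∈ Ico (0:ℝ) T, |u x t| ≤ R) :
    ∃ η > (0:ℝ), ∃ uhat : EuclideanSpace ℝ (Fin n) → ℝ → ℝ,
      ContinuousOn (fun p : EuclideanSpace ℝ (Fin n) × ℝ => uhat p.1 p.2)
        (Ω ×ˢ Ico 0 (T + η)) ∧
      (∃ M : ℝ, ∀ x ∈ Ω, ∀ t ∈ Ico (0:ℝ) (T + η), |uhat x t| ≤ M) ∧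
      (∀ x ∈ Ω, ∀ t ∈ Ico (0:ℝ) (T + η),
        uhat x t = u₀ x + ∫ s in (0:ℝ)..t, ∫ y in Ω, K x y * deriv ρ (uhat x s - uhat y s)) ∧
      (∀ x ∈ Ω, ∀ t ∈ Ico (0:ℝ) T, uhat x t = u x t) := by
  obtain ⟨x₀, hx₀⟩ := hΩne
  have hR0 : 0 ≤ R := (abs_nonneg _).trans (hubd x₀ hx₀ 0 ⟨le_rfl, hT⟩)
  have hD0 : 0 ≤ D := le_trans (integral_nonneg fun y => hKnonneg x₀ y) (hD x₀ hx₀)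
  set A : ℝ := 2 * R + 2 with hAdef
  have hA0 : 0 < A := by positivity
  obtain ⟨L₀, hL₀⟩ := hρ'lip A hA0
  set L : ℝ := max L₀ 0 with hLdef
  have hL : 0 ≤ L := le_max_right _ _
  set cl : ℝ → ℝ := fun a => max (-A) (min A a) with hcldef
  have hcl_mem : ∀ a, |cl a| ≤ A := by
    intro a
    rw [abs_le]
    constructor
    · exact le_max_left _ _
    · exact max_le (by linarith) (min_le_left _ _)
  have hcl_lip : ∀ a b, |cl a - cl b| ≤ |a - b| := by
    intro a b
    have h1 : |max (-A) (min A a) - max (-A) (min A b)| ≤ |min A a - min A b| := by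
      rw [max_comm (-A) (min A a), max_comm (-A) (min A b)]
      exact abs_max_sub_max_le_abs _ _ _
    refine h1.trans ?_
    rw [min_comm A a, min_comm A b]
    refine (abs_min_sub_min_le_max a A b A).trans ?_
    simp [abs_nonneg]
  have hcl_eq : ∀ a, |a| ≤ A → cl a = a := by
    intro a ha
    rw [hcldef]
    simp only []
    rw [min_eq_right (abs_le.1 ha).2, max_eq_right (abs_le.1 ha).1]
  set ψ : ℝ → ℝ := fun a => deriv ρ (cl a) with hψdef
  have hψlip : ∀ a b : ℝ, |ψ a - ψ b| ≤ L * |a - b| := by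
    intro a b
    calc |deriv ρ (cl a) - deriv ρ (cl b)| ≤ L₀ * |cl a - cl b| :=
        hL₀ _ _ (hcl_mem a) (hcl_mem b)
      _ ≤ L * |cl a - cl b| := mul_le_mul_of_nonneg_right (le_max_left _ _) (abs_nonneg _)
      _ ≤ L * |a - b| := mul_le_mul_of_nonneg_left (hcl_lip a b) hL
  set C : ℝ := |deriv ρ 0| + L * A with hCdef
  have hC : 0 ≤ C := by positivity
  have hcl0 : cl 0 = 0 := hcl_eq 0 (by rw [abs_zero]; linarith)
  have hψbd : ∀ a, |ψ a| ≤ C := by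
    intro a
    have h1 : |deriv ρ (cl a) - deriv ρ 0| ≤ L₀ * |cl a - 0| :=
      hL₀ _ _ (hcl_mem a) (by rw [abs_zero]; linarith)
    have h2 : L₀ * |cl a - 0| ≤ L * A := by
      calc L₀ * |cl a - 0| ≤ L * |cl a - 0| :=
          mul_le_mul_of_nonneg_right (le_max_left _ _) (abs_nonneg _)
        _ ≤ L * A := by
            refine mul_le_mul_of_nonneg_left ?_ hL
            rw [sub_zero]
            exact hcl_mem a
    calc |ψ a| = |deriv ρ 0 + (deriv ρ (cl a) - deriv ρ 0)| := by rw [hψdef]; ring_nf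
      _ ≤ |deriv ρ 0| + |deriv ρ (cl a) - deriv ρ 0| := abs_add_le _ _
      _ ≤ |deriv ρ 0| + L * A := add_le_add le_rfl (h1.trans h2)
  have hψc : Continuous ψ := by
    have : LipschitzWith (Real.toNNReal L) ψ := by
      refine LipschitzWith.of_dist_le_mul (fun a b => ?_)
      rw [Real.dist_eq, Real.dist_eq, Real.coe_toNNReal _ hL]
      exact hψlip a b
    exact this.continuous
  have hψeq : ∀ a, |a| ≤ A → ψ a = deriv ρ a := by
    intro a ha
    rw [hψdef]
    simp only []
    rw [hcl_eq a ha]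
  set η : ℝ := 1 / (D * C + 1) with hηdef
  have hη : 0 < η := by positivity
  have hηDC : η * (D * C) ≤ 1 := by
    rw [hηdef]
    rw [div_mul_eq_mul_div, one_mul, div_le_one (by positivity)]
    linarith
  set τ : ℝ := T + η with hτdef
  have hτ : 0 < τ := by positivity
  have hTτ : T ≤ τ := by rw [hτdef]; linarith
  obtain ⟨U, hUcont, ⟨M, hUbd⟩, hUeq⟩ :=
    exist_sol (Ω := Ω) (K := K) (ψ := ψ) (C := C) (D := D) (L := L)
      ⟨x₀, hx₀⟩ hΩmeas hKnonneg hKmeas hKint hKcont hD hD0 hψc hψbd hC hL hψlip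
      u₀ hu₀cont M₀ hu₀bd τ hτ
  -- u satisfies the ψ-equation on [0,T)
  have hueqψ : ∀ x ∈ Ω, ∀ t ∈ Ico (0:ℝ) T,
      u x t = u₀ x + ∫ s in (0:ℝ)..t, gnl Ω K ψ u x s := by
    intro x hx t ht
    rw [hueq x hx t ht]
    congr 1
    refine intervalIntegral.integral_congr (fun s hs => ?_)
    rw [Set.uIcc_of_le ht.1] at hs
    have hsT : s ∈ Ico (0:ℝ) T := ⟨hs.1, lt_of_le_of_lt hs.2 ht.2⟩
    refine (setIntegral_congr_fun hΩmeas (fun y hy => ?_)).symm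
    show K x y * ψ (u x s - u y s) = K x y * deriv ρ (u x s - u y s)
    rw [hψeq _ ?_]
    calc |u x s - u y s| ≤ |u x s| + |u y s| := abs_sub _ _
      _ ≤ R + R := add_le_add (hubd x hx s hsT) (hubd y hy s hsT)
      _ ≤ A := by rw [hAdef]; linarith
  -- slice regularity of u and U
  have humeas : ∀ s ∈ Ico (0:ℝ) T, AEMeasurable (fun y => u y s) (volume.restrict Ω) := by
    intro s hs
    have : ContinuousOn (fun y => u y s) Ω :=
      hucont.comp ((continuous_id.prodMk continuous_const).continuousOn
        (s := Ω) (f := fun y : EuclideanSpace ℝ (Fin n) => (y, s)))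
        (fun y hy => Set.mem_prod.2 ⟨hy, hs⟩)
    exact this.aemeasurable hΩmeas
  have huconts : ∀ x ∈ Ω, ∀ b ∈ Ico (0:ℝ) T, ContinuousOn (fun s => u x s) (Icc (0:ℝ) b) := by
    intro x hx b hb
    exact hucont.comp ((continuous_const.prodMk continuous_id).continuousOn
      (s := Icc (0:ℝ) b) (f := fun s : ℝ => (x, s)))
      (fun s hs => Set.mem_prod.2 ⟨hx, ⟨hs.1, lt_of_le_of_lt hs.2 hb.2⟩⟩)
  have hUmeas : ∀ s ∈ Icc (0:ℝ) τ, AEMeasurable (fun y => U y s) (volume.restrict Ω) := by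
    intro s hs
    have : ContinuousOn (fun y => U y s) Ω :=
      hUcont.comp ((continuous_id.prodMk continuous_const).continuousOn
        (s := Ω) (f := fun y : EuclideanSpace ℝ (Fin n) => (y, s)))
        (fun y hy => Set.mem_prod.2 ⟨hy, hs⟩)
    exact this.aemeasurable hΩmeas
  have hUconts : ∀ x ∈ Ω, ContinuousOn (fun s => U x s) (Icc (0:ℝ) τ) := by
    intro x hx
    exact hUcont.comp ((continuous_const.prodMk continuous_id).continuousOn
      (s := Icc (0:ℝ) τ) (f := fun s : ℝ => (x, s)))
      (fun s hs => Set.mem_prod.2 ⟨hx, hs⟩)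
  -- U agrees with u on [0,T)
  have hUu : ∀ x ∈ Ω, ∀ t ∈ Ico (0:ℝ) T, U x t = u x t := by
    intro x hx t ht
    have hIccsub : Icc (0:ℝ) t ⊆ Ico (0:ℝ) T := fun s hs => ⟨hs.1, lt_of_le_of_lt hs.2 ht.2⟩
    have hIccsubτ : Icc (0:ℝ) t ⊆ Icc (0:ℝ) τ :=
      fun s hs => ⟨hs.1, hs.2.trans (ht.2.le.trans hTτ)⟩
    refine uniq_sol (Ω := Ω) (K := K) (ψ := ψ) (C := C) (D := D) (L := L)
      ⟨x₀, hx₀⟩ hΩmeas hKnonneg hKmeas hKint hD hD0 hψc hψbd hC hL hψlip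
      u₀ t ht.1 U u
      (fun z hz => (hUconts z hz).mono hIccsubτ)
      (fun z hz => huconts z hz t ht)
      (fun s hs => hUmeas s (hIccsubτ hs))
      (fun s hs => humeas s (hIccsub hs))
      M (fun z hz s hs => hUbd z s)
      R (fun z hz s hs => hubd z hz s (hIccsub hs))
      (fun z hz s hs => hUeq z hz s (hIccsubτ hs))
      (fun z hz s hs => hueqψ z hz s (hIccsub hs))
      x hx t ⟨ht.1, le_rfl⟩
  -- integrability of the nonlocal term for U
  have hgUcont : ∀ x ∈ Ω, ContinuousOn (gnl Ω K ψ U x) (Icc (0:ℝ) τ) := by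
    intro x hx
    exact gnl_contOn_s hΩmeas hKnonneg hKmeas hKint hψc hψbd U τ hx hUmeas
      (hUconts x hx) (fun y hy => hUconts y hy)
  have hgUii : ∀ x ∈ Ω, ∀ a ∈ Icc (0:ℝ) τ, ∀ b ∈ Icc (0:ℝ) τ,
      IntervalIntegrable (gnl Ω K ψ U x) volume a b := by
    intro x hx a ha b hb
    exact ((hgUcont x hx).mono (Set.uIcc_subset_Icc ha hb)).intervalIntegrable
  have hgUbd : ∀ x ∈ Ω, ∀ s : ℝ, |gnl Ω K ψ U x s| ≤ D * C :=
    fun x hx s => gnl_bound hKnonneg hKint hD hC hψbd U hx s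
  have hTmem : T ∈ Icc (0:ℝ) τ := ⟨hT.le, hTτ⟩
  -- deviation estimate for U between two times
  have hdev : ∀ x ∈ Ω, ∀ a ∈ Icc (0:ℝ) τ, ∀ b ∈ Icc (0:ℝ) τ,
      |U x b - U x a| ≤ D * C * |b - a| := by
    intro x hx a ha b hb
    rw [hUeq x hx a ha, hUeq x hx b hb]
    rw [add_sub_add_left_eq_sub,
      intervalIntegral.integral_interval_sub_left (hgUii x hx 0 ⟨le_rfl, hτ.le⟩ b hb)
        (hgUii x hx 0 ⟨le_rfl, hτ.le⟩ a ha)]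
    have hbnd : ∀ s ∈ Set.uIoc a b, ‖gnl Ω K ψ U x s‖ ≤ D * C := fun s _ => by
      rw [Real.norm_eq_abs]; exact hgUbd x hx s
    have := intervalIntegral.norm_integral_le_of_norm_le_const hbnd
    rw [Real.norm_eq_abs] at this
    exact this
  -- |U x T| ≤ R
  have hUT : ∀ x ∈ Ω, |U x T| ≤ R := by
    intro x hx
    refine le_of_forall_pos_le_add (fun ε hε => ?_)
    set t : ℝ := max 0 (T - ε / (D * C + 1)) with htdef
    have ht0 : 0 ≤ t := le_max_left _ _
    have htT : t < T := by
      rw [htdef]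
      refine max_lt hT ?_
      have : 0 < ε / (D * C + 1) := by positivity
      linarith
    have htτ : t ∈ Icc (0:ℝ) τ := ⟨ht0, (htT.le.trans hTτ)⟩
    have hTt : T - t ≤ ε / (D * C + 1) := by
      have := le_max_right (0:ℝ) (T - ε / (D * C + 1))
      rw [htdef]
      linarith
    have h1 : |U x T| ≤ |U x t| + D * C * |T - t| := by
      have := hdev x hx t htτ T hTmem
      calc |U x T| = |U x t + (U x T - U x t)| := by ring_nf
        _ ≤ |U x t| + |U x T - U x t| := abs_add_le _ _
        _ ≤ |U x t| + D * C * |T - t| := add_le_add le_rfl this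
    have h2 : |U x t| ≤ R := by
      rw [hUu x hx t ⟨ht0, htT⟩]
      exact hubd x hx t ⟨ht0, htT⟩
    have h3 : D * C * |T - t| ≤ ε := by
      rw [abs_of_nonneg (by linarith)]
      calc D * C * (T - t) ≤ D * C * (ε / (D * C + 1)) :=
          mul_le_mul_of_nonneg_left hTt (by positivity)
        _ ≤ ε := by
            rw [mul_div_assoc']
            rw [div_le_iff₀ (by positivity)]
            nlinarith [mul_nonneg hD0 hC]
    linarith
  -- global bound |U| ≤ R + 1 on Ω × [0,τ]
  have hUbd1 : ∀ x ∈ Ω, ∀ t ∈ Icc (0:ℝ) τ, |U x t| ≤ R + 1 := by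
    intro x hx t ht
    rcases lt_or_ge t T with hlt | hge
    · rw [hUu x hx t ⟨ht.1, hlt⟩]
      linarith [hubd x hx t ⟨ht.1, hlt⟩]
    · have h1 : |U x t| ≤ |U x T| + D * C * |t - T| := by
        have := hdev x hx T hTmem t ht
        calc |U x t| = |U x T + (U x t - U x T)| := by ring_nf
          _ ≤ |U x T| + |U x t - U x T| := abs_add_le _ _
          _ ≤ |U x T| + D * C * |t - T| := add_le_add le_rfl this
      have h2 : D * C * |t - T| ≤ 1 := by
        rw [abs_of_nonneg (by linarith)]
        have htτ2 : t - T ≤ η := by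
          have := ht.2
          rw [hτdef] at this
          linarith
        calc D * C * (t - T) ≤ D * C * η :=
            mul_le_mul_of_nonneg_left htτ2 (by positivity)
          _ ≤ 1 := by rw [mul_comm]; exact hηDC
      linarith [hUT x hx]
  -- convert the ψ-equation for U into the deriv ρ equation
  have heqρ : ∀ x ∈ Ω, ∀ t ∈ Ico (0:ℝ) (T + η),
      U x t = u₀ x + ∫ s in (0:ℝ)..t, ∫ y in Ω, K x y * deriv ρ (U x s - U y s) := by
    intro x hx t ht
    have htτ2 : t ∈ Icc (0:ℝ) τ := ⟨ht.1, by rw [hτdef]; exact ht.2.le⟩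
    rw [hUeq x hx t htτ2]
    congr 1
    refine intervalIntegral.integral_congr (fun s hs => ?_)
    rw [Set.uIcc_of_le ht.1] at hs
    have hsτ : s ∈ Icc (0:ℝ) τ := ⟨hs.1, hs.2.trans htτ2.2⟩
    refine setIntegral_congr_fun hΩmeas (fun y hy => ?_)
    show K x y * ψ (U x s - U y s) = K x y * deriv ρ (U x s - U y s)
    rw [hψeq _ ?_]
    calc |U x s - U y s| ≤ |U x s| + |U y s| := abs_sub _ _
      _ ≤ (R + 1) + (R + 1) := add_le_add (hUbd1 x hx s hsτ) (hUbd1 y hy s hsτ)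
      _ ≤ A := by rw [hAdef]; linarith
  refine ⟨η, hη, U, ?_, ⟨M, fun x hx t ht => hUbd x t⟩, heqρ, hUu⟩
  refine hUcont.mono ?_
  refine Set.prod_mono subset_rfl ?_
  rw [hτdef]
  exact Ico_subset_Icc_self
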